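/- The number of cyclic binary sequences of length 2n with exactly n+1 ones and n-1 zeros that contain exactly b cyclically-consecutive pairs of zeros (i.e., b positions k with both entries at k and k+1 mod 2n equal to zero) is (2n/(n+1)) * C(n+1, n-b-1) * C(n-2, b). -/

import Mathlib

open Finset

/-- number of zeros -/
def zCount {M : ℕ} (t : Fin M → Fin 2) : ℕ := ((univ : Finset (Fin M)).filter fun i => t i = 0).card
/-- number of ones -/
def oCount {M : ℕ} (t : Fin M → Fin 2) : ℕ := ((univ : Finset (Fin M)).filter fun i => t i = 1).card
/-- cyclic 00-adjacencies -/
def cycCount {M : ℕ} [NeZero M] (t : Fin M → Fin 2) : ℕ :=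
  ((univ : Finset (Fin M)).filter fun i => t i = 0 ∧ t (i + 1) = 0).card
/-- linear 00-adjacencies (excluding the wrap-around pair) -/
def aCount {M : ℕ} [NeZero M] (t : Fin M → Fin 2) : ℕ :=
  ((univ : Finset (Fin M)).filter fun i => i.val + 1 ≠ M ∧ t i = 0 ∧ t (i + 1) = 0).card

def cA (m z b : ℕ) : ℕ :=
  (univ.filter fun t : Fin (m+1) → Fin 2 =>
    t 0 = 1 ∧ t (Fin.last m) = 0 ∧ zCount t = z ∧ aCount t = b).card
def cB (m z b : ℕ) : ℕ :=
  (univ.filter fun t : Fin (m+1) → Fin 2 =>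
    t 0 = 1 ∧ t (Fin.last m) = 1 ∧ zCount t = z ∧ aCount t = b).card

def fA (m z b : ℕ) : ℕ :=
  if z ≤ m ∧ 1 ≤ z ∧ b < z then Nat.choose (z-1) (z-1-b) * Nat.choose (m-z) (z-1-b) else 0
def fB (m z b : ℕ) : ℕ :=
  if b < z then Nat.choose (z-1) (z-1-b) * Nat.choose (m-z) (z-b)
  else if z = 0 ∧ b = 0 then 1 else 0

lemma fin2_ne_zero : ∀ x : Fin 2, ¬x = 0 ↔ x = 1 := by decide
lemma fin2_ne_one : ∀ x : Fin 2, ¬x = 1 ↔ x = 0 := by decide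

lemma card_filter_congr {A : Type*} [Fintype A] {P Q : A → Prop}
    [DecidablePred P] [DecidablePred Q] (h : ∀ a, P a ↔ Q a) :
    (univ.filter P).card = (univ.filter Q).card := by
  congr 1
  exact Finset.filter_congr (fun a _ => h a)

lemma split_last {m : ℕ} (Q : (Fin (m+1) → Fin 2) → Prop) [DecidablePred Q] :
    (univ.filter Q).card
      = (univ.filter fun u => Q u ∧ u (Fin.last m) = 0).card
        + (univ.filter fun u => Q u ∧ u (Fin.last m) = 1).card := by
  rw [← Finset.card_filter_add_card_filter_not
    (s := univ.filter Q) (p := fun u => u (Fin.last m) = 0),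
    Finset.filter_filter, Finset.filter_filter]
  congr 1
  apply card_filter_congr
  intro u
  rw [fin2_ne_zero]

lemma oCount_add_zCount {M : ℕ} (t : Fin M → Fin 2) : oCount t + zCount t = M := by
  unfold oCount zCount
  have h := Finset.card_filter_add_card_filter_not
    (s := (univ : Finset (Fin M))) (p := fun i => t i = 1)
  simp only [fin2_ne_one] at h
  simpa using h

lemma filter_rot {M : ℕ} [NeZero M] (c : Fin M) (p : Fin M → Prop) [DecidablePred p] :
    ((univ : Finset (Fin M)).filter fun i => p (c + i)).card
      = ((univ : Finset (Fin M)).filter p).card := by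
  apply Finset.card_equiv (Equiv.addLeft c)
  intro i
  simp

lemma oCount_rot {M : ℕ} [NeZero M] (s : Fin M → Fin 2) (c : Fin M) :
    oCount (fun i => s (c + i)) = oCount s := by
  unfold oCount
  exact filter_rot c (fun j => s j = 1)

lemma cycCount_rot {M : ℕ} [NeZero M] (s : Fin M → Fin 2) (c : Fin M) :
    cycCount (fun i => s (c + i)) = cycCount s := by
  unfold cycCount
  have h : ∀ i : Fin M, s (c + (i + 1)) = s ((c + i) + 1) := fun i => by rw [add_assoc]
  simp_rw [h]
  exact filter_rot c (fun j => s j = 0 ∧ s (j + 1) = 0)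

lemma cycCount_eq_aCount {M : ℕ} [NeZero M] (t : Fin M → Fin 2) (h : t 0 = 1) :
    cycCount t = aCount t := by
  unfold cycCount aCount
  apply card_filter_congr
  intro i
  by_cases hi : i.val + 1 = M
  · have h0 : i + 1 = 0 := by
      apply Fin.ext
      simp [Fin.val_add, ← hi]
    rw [h0]
    simp [hi, h]
  · simp [hi]

lemma card_filter_fin_succ {N : ℕ} (p : Fin (N+1) → Prop) [DecidablePred p] :
    ((univ : Finset (Fin (N+1))).filter p).card
      = ((univ : Finset (Fin N)).filter (fun j => p (Fin.castSucc j))).card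
        + (if p (Fin.last N) then 1 else 0) := by
  rw [Finset.card_filter, Finset.card_filter, Fin.sum_univ_castSucc]

lemma snoc_zero' {m : ℕ} (u : Fin (m+1) → Fin 2) (x : Fin 2) :
    (Fin.snoc u x : Fin (m+1+1) → Fin 2) 0 = u 0 := by
  rw [show (0 : Fin (m+1+1)) = Fin.castSucc 0 by simp, Fin.snoc_castSucc]

lemma zCount_snoc {m : ℕ} (u : Fin (m+1) → Fin 2) (x : Fin 2) :
    zCount (Fin.snoc u x : Fin (m+1+1) → Fin 2) = zCount u + if x = 0 then 1 else 0 := by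
  unfold zCount
  rw [card_filter_fin_succ]
  simp [Fin.snoc_castSucc, Fin.snoc_last]

lemma cs_add_one {m : ℕ} (j : Fin m) :
    (Fin.castSucc (Fin.castSucc j)) + 1 = Fin.castSucc ((Fin.castSucc j) + 1) := by
  apply Fin.ext
  have hj : (j : ℕ) < m := j.isLt
  simp [Fin.val_add]

lemma cs_last_add_one {m : ℕ} :
    (Fin.castSucc (Fin.last m)) + 1 = Fin.last (m+1) := by
  apply Fin.ext
  simp [Fin.val_add]

lemma aCount_snoc {m : ℕ} (u : Fin (m+1) → Fin 2) (x : Fin 2) :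
    aCount (Fin.snoc u x : Fin (m+1+1) → Fin 2)
      = aCount u + if u (Fin.last m) = 0 ∧ x = 0 then 1 else 0 := by
  unfold aCount
  rw [card_filter_fin_succ, card_filter_fin_succ,
    card_filter_fin_succ (p := fun i : Fin (m+1) => i.val + 1 ≠ m + 1 ∧ u i = 0 ∧ u (i+1) = 0)]
  have h1 : ¬((Fin.last (m+1)).val + 1 ≠ m + 1 + 1 ∧
      (Fin.snoc u x : Fin (m+1+1) → Fin 2) (Fin.last (m+1)) = 0 ∧
      (Fin.snoc u x : Fin (m+1+1) → Fin 2) ((Fin.last (m+1)) + 1) = 0) := by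
    simp
  have h2 : ((Fin.castSucc (Fin.last m)).val + 1 ≠ m + 1 + 1 ∧
      (Fin.snoc u x : Fin (m+1+1) → Fin 2) (Fin.castSucc (Fin.last m)) = 0 ∧
      (Fin.snoc u x : Fin (m+1+1) → Fin 2) ((Fin.castSucc (Fin.last m)) + 1) = 0)
      ↔ (u (Fin.last m) = 0 ∧ x = 0) := by
    rw [cs_last_add_one]
    simp [Fin.snoc_castSucc, Fin.snoc_last]
  have h3 : ¬((Fin.last m).val + 1 ≠ m + 1 ∧ u (Fin.last m) = 0 ∧ u (Fin.last m + 1) = 0) := by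
    simp
  rw [if_neg h1, if_congr h2 rfl rfl, if_neg h3]
  have h4 : ∀ j : Fin m,
      ((Fin.castSucc (Fin.castSucc j)).val + 1 ≠ m + 1 + 1 ∧
        (Fin.snoc u x : Fin (m+1+1) → Fin 2) (Fin.castSucc (Fin.castSucc j)) = 0 ∧
        (Fin.snoc u x : Fin (m+1+1) → Fin 2) ((Fin.castSucc (Fin.castSucc j)) + 1) = 0)
      ↔ ((Fin.castSucc j).val + 1 ≠ m + 1 ∧ u (Fin.castSucc j) = 0 ∧ u ((Fin.castSucc j) + 1) = 0) := by
    intro j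
    have hj : (j : ℕ) < m := j.isLt
    rw [cs_add_one, Fin.snoc_castSucc, Fin.snoc_castSucc]
    simp only [Fin.coe_castSucc]
    constructor
    · rintro ⟨-, h⟩; exact ⟨by omega, h⟩
    · rintro ⟨-, h⟩; exact ⟨by omega, h⟩
  rw [card_filter_congr h4]
  omega

def snocEquiv (m : ℕ) : ((Fin (m+1) → Fin 2) × Fin 2) ≃ (Fin (m+1+1) → Fin 2) where
  toFun p := Fin.snoc p.1 p.2
  invFun t := (Fin.init t, t (Fin.last (m+1)))
  left_inv p := by simp
  right_inv t := by simp

lemma card_filter_snoc {m : ℕ} (P : (Fin (m+1+1) → Fin 2) → Prop) [DecidablePred P] :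
    ((univ : Finset (Fin (m+1+1) → Fin 2)).filter P).card
      = ((univ : Finset ((Fin (m+1) → Fin 2) × Fin 2)).filter
          (fun p => P (Fin.snoc p.1 p.2))).card := by
  refine (Finset.card_equiv (snocEquiv m) ?_).symm
  intro p
  simp [snocEquiv]

lemma card_filter_prod_fin2 {A : Type*} [Fintype A] [DecidableEq A] (P : A → Fin 2 → Prop)
    [∀ a x, Decidable (P a x)] :
    ((univ : Finset (A × Fin 2)).filter fun p => P p.1 p.2).card
      = ((univ : Finset A).filter fun a => P a 0).card
        + ((univ : Finset A).filter fun a => P a 1).card := by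
  rw [Finset.card_filter, Finset.card_filter, Finset.card_filter, Fintype.sum_prod_type,
    ← Finset.sum_add_distrib]
  apply Finset.sum_congr rfl
  intro a _
  rw [Fin.sum_univ_two]

lemma fin2_cases : ∀ x : Fin 2, x = 0 ∨ x = 1 := by decide

-- R4
lemma cB_succ (m z b : ℕ) : cB (m+1) z b = cA m z b + cB m z b := by
  unfold cA cB
  rw [card_filter_snoc]
  rw [card_filter_prod_fin2 (P := fun (u : Fin (m+1) → Fin 2) (x : Fin 2) =>
      (Fin.snoc u x : Fin (m+1+1) → Fin 2) 0 = 1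
      ∧ (Fin.snoc u x : Fin (m+1+1) → Fin 2) (Fin.last (m+1)) = 1
      ∧ zCount (Fin.snoc u x : Fin (m+1+1) → Fin 2) = z
      ∧ aCount (Fin.snoc u x : Fin (m+1+1) → Fin 2) = b)]
  simp only [snoc_zero', Fin.snoc_last, zCount_snoc, aCount_snoc]
  simp only [show ((0:Fin 2) = 1) ↔ False by decide, show ((0:Fin 2) = 0) ↔ True by decide,
    show ((1:Fin 2) = 0) ↔ False by decide, show ((1:Fin 2) = 1) ↔ True by decide,
    if_true, and_false, if_false, and_true, true_and, false_and, and_false,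
    Finset.filter_false, Finset.card_empty, add_zero, zero_add]
  rw [split_last (Q := fun u => u 0 = 1 ∧ zCount u = z ∧ aCount u = b)]
  congr 1 <;> apply card_filter_congr <;> intro u <;> tauto

-- R1
lemma cA_succ_succ (m z b : ℕ) : cA (m+1) (z+1) (b+1) = cA m z b + cB m z (b+1) := by
  unfold cA cB
  rw [card_filter_snoc]
  rw [card_filter_prod_fin2 (P := fun (u : Fin (m+1) → Fin 2) (x : Fin 2) =>
      (Fin.snoc u x : Fin (m+1+1) → Fin 2) 0 = 1
      ∧ (Fin.snoc u x : Fin (m+1+1) → Fin 2) (Fin.last (m+1)) = 0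
      ∧ zCount (Fin.snoc u x : Fin (m+1+1) → Fin 2) = z + 1
      ∧ aCount (Fin.snoc u x : Fin (m+1+1) → Fin 2) = b + 1)]
  simp only [snoc_zero', Fin.snoc_last, zCount_snoc, aCount_snoc]
  simp only [show ((0:Fin 2) = 1) ↔ False by decide, show ((0:Fin 2) = 0) ↔ True by decide,
    show ((1:Fin 2) = 0) ↔ False by decide, show ((1:Fin 2) = 1) ↔ True by decide,
    if_true, and_false, if_false, and_true, true_and, false_and,
    Finset.filter_false, Finset.card_empty, add_zero, zero_add, Nat.add_left_inj]
  rw [split_last (Q := fun u => u 0 = 1 ∧ zCount u = z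
      ∧ aCount u + (if u (Fin.last m) = 0 then 1 else 0) = b + 1)]
  congr 1 <;> apply card_filter_congr <;> intro u
  · constructor
    · rintro ⟨⟨h1, h2, h3⟩, h4⟩
      rw [if_pos h4] at h3
      exact ⟨h1, h4, h2, by omega⟩
    · rintro ⟨h1, h4, h2, h3⟩
      refine ⟨⟨h1, h2, ?_⟩, h4⟩
      rw [if_pos h4, h3]
  · constructor
    · rintro ⟨⟨h1, h2, h3⟩, h4⟩
      rw [if_neg (by rw [h4]; decide)] at h3
      exact ⟨h1, h4, h2, by omega⟩
    · rintro ⟨h1, h4, h2, h3⟩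
      refine ⟨⟨h1, h2, ?_⟩, h4⟩
      rw [if_neg (by rw [h4]; decide), h3, add_zero]

-- R2
lemma cA_succ_zero (m z : ℕ) : cA (m+1) (z+1) 0 = cB m z 0 := by
  unfold cA cB
  rw [card_filter_snoc]
  rw [card_filter_prod_fin2 (P := fun (u : Fin (m+1) → Fin 2) (x : Fin 2) =>
      (Fin.snoc u x : Fin (m+1+1) → Fin 2) 0 = 1
      ∧ (Fin.snoc u x : Fin (m+1+1) → Fin 2) (Fin.last (m+1)) = 0
      ∧ zCount (Fin.snoc u x : Fin (m+1+1) → Fin 2) = z + 1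
      ∧ aCount (Fin.snoc u x : Fin (m+1+1) → Fin 2) = 0)]
  simp only [snoc_zero', Fin.snoc_last, zCount_snoc, aCount_snoc]
  simp only [show ((0:Fin 2) = 1) ↔ False by decide, show ((0:Fin 2) = 0) ↔ True by decide,
    show ((1:Fin 2) = 0) ↔ False by decide, show ((1:Fin 2) = 1) ↔ True by decide,
    if_true, and_false, if_false, and_true, true_and, false_and,
    Finset.filter_false, Finset.card_empty, add_zero, zero_add, Nat.add_left_inj]
  apply card_filter_congr
  intro u
  constructor
  · rintro ⟨h1, h2, h3⟩
    rcases fin2_cases (u (Fin.last m)) with h4 | h4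
    · rw [if_pos h4] at h3; omega
    · rw [if_neg (by rw [h4]; decide), add_zero] at h3
      exact ⟨h1, h4, h2, h3⟩
  · rintro ⟨h1, h4, h2, h3⟩
    refine ⟨h1, h2, ?_⟩
    rw [if_neg (by rw [h4]; decide), add_zero, h3]

-- R3
lemma cA_zero (m b : ℕ) : cA m 0 b = 0 := by
  unfold cA
  rw [Finset.card_eq_zero, Finset.filter_eq_empty_iff]
  rintro t - ⟨h1, h2, h3, h4⟩
  have hm : Fin.last m ∈ (univ : Finset (Fin (m+1))).filter fun i => t i = 0 :=
    Finset.mem_filter.mpr ⟨Finset.mem_univ _, h2⟩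
  have := Finset.card_pos.mpr ⟨_, hm⟩
  unfold zCount at h3
  omega

-- base cases
lemma aCount_fin1 (t : Fin 1 → Fin 2) : aCount t = 0 := by
  unfold aCount
  rw [Finset.card_eq_zero, Finset.filter_eq_empty_iff]
  rintro i - ⟨h1, -⟩
  exact h1 (by omega)

lemma zCount_fin1 (t : Fin 1 → Fin 2) (h : t 0 = 1) : zCount t = 0 := by
  unfold zCount
  rw [Finset.card_eq_zero, Finset.filter_eq_empty_iff]
  rintro i -
  have : i = 0 := by
    apply Fin.ext
    omega
  rw [this, h]
  decide

lemma cA_base (z b : ℕ) : cA 0 z b = 0 := by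
  unfold cA
  rw [Finset.card_eq_zero, Finset.filter_eq_empty_iff]
  rintro t - ⟨h1, h2, -⟩
  rw [show Fin.last 0 = 0 by rfl, h1] at h2
  exact absurd h2 (by decide)

lemma cB_base (z b : ℕ) : cB 0 z b = if z = 0 ∧ b = 0 then 1 else 0 := by
  unfold cB
  have key : ∀ t : Fin 1 → Fin 2,
      (t 0 = 1 ∧ t (Fin.last 0) = 1 ∧ zCount t = z ∧ aCount t = b)
        ↔ (t 0 = 1 ∧ (z = 0 ∧ b = 0)) := by
    intro t
    rw [show Fin.last 0 = 0 by rfl]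
    constructor
    · rintro ⟨h1, -, h3, h4⟩
      rw [zCount_fin1 t h1] at h3
      rw [aCount_fin1 t] at h4
      exact ⟨h1, h3.symm, h4.symm⟩
    · rintro ⟨h1, hz, hb⟩
      exact ⟨h1, h1, by rw [zCount_fin1 t h1, hz], by rw [aCount_fin1 t, hb]⟩
  rw [card_filter_congr key]
  by_cases hzb : z = 0 ∧ b = 0
  · rw [if_pos hzb]
    rw [card_filter_congr (Q := fun t : Fin 1 → Fin 2 => t 0 = 1) (fun t => by simp [hzb])]
    decide
  · rw [if_neg hzb]
    rw [card_filter_congr (Q := fun _ => False) (fun t => by tauto), Finset.filter_false]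
    rfl

lemma arithB (m z b : ℕ) : fB (m+1) z b = fA m z b + fB m z b := by
  unfold fA fB
  by_cases h1 : b < z
  · rw [if_pos h1, if_pos h1]
    by_cases h2 : z ≤ m
    · rw [if_pos (by exact ⟨h2, by omega, h1⟩)]
      rw [show m + 1 - z = (m - z) + 1 from by omega,
        show z - b = (z - 1 - b) + 1 from by omega, Nat.choose_succ_succ]
      ring
    · rw [if_neg (by omega), show m + 1 - z = 0 from by omega,
        show m - z = 0 from by omega, zero_add]
  · rw [if_neg h1, if_neg h1, if_neg (show ¬(z ≤ m ∧ 1 ≤ z ∧ b < z) from by omega), zero_add]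

lemma arithA2 (m z : ℕ) : fA (m+1) (z+1) 0 = fB m z 0 := by
  unfold fA fB
  by_cases hz : z = 0
  · subst hz
    rw [if_pos (by omega), if_neg (by omega), if_pos ⟨rfl, rfl⟩]
    simp
  · by_cases h2 : z ≤ m
    · rw [if_pos (by refine ⟨by omega, by omega, by omega⟩), if_pos (by omega)]
      rw [show z + 1 - 1 = z from by omega, show z - 0 = z from by omega,
        show z - 1 - 0 = z - 1 from by omega, show m + 1 - (z + 1) = m - z from by omega]
      simp [Nat.choose_self]
    · rw [if_neg (by omega), if_pos (by omega), show m - z = 0 from by omega,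
        Nat.choose_eq_zero_of_lt (by omega : 0 < z - 0), mul_zero]

lemma arithA1 (m z b : ℕ) : fA (m+1) (z+1) (b+1) = fA m z b + fB m z (b+1) := by
  unfold fA fB
  by_cases h1 : b < z
  · by_cases h2 : z ≤ m
    · rw [if_pos (by refine ⟨by omega, by omega, by omega⟩), if_pos ⟨h2, by omega, h1⟩]
      by_cases h3 : b + 1 < z
      · rw [if_pos h3]
        rw [show z + 1 - 1 - (b+1) = (z - 1 - (b+1)) + 1 from by omega,
          show z + 1 - 1 = (z - 1) + 1 from by omega,
          show m + 1 - (z + 1) = m - z from by omega,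
          show z - 1 - b = (z - 1 - (b+1)) + 1 from by omega,
          show z - (b+1) = (z - 1 - (b+1)) + 1 from by omega,
          Nat.choose_succ_succ]
        ring
      · rw [if_neg h3, if_neg (by omega), add_zero]
        rw [show z + 1 - 1 - (b+1) = 0 from by omega, show z - 1 - b = 0 from by omega]
        simp
    · rw [if_neg (by omega), if_neg (by omega), zero_add]
      by_cases h3 : b + 1 < z
      · rw [if_pos h3, show m - z = 0 from by omega,
          Nat.choose_eq_zero_of_lt (by omega : 0 < z - (b+1)), mul_zero]
      · rw [if_neg h3, if_neg (by omega)]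
  · rw [if_neg (by omega), if_neg (by omega), if_neg (by omega), if_neg (by omega)]

lemma count_eq : ∀ m z b, cA m z b = fA m z b ∧ cB m z b = fB m z b := by
  intro m
  induction m with
  | zero =>
    intro z b
    constructor
    · rw [cA_base]
      unfold fA
      rw [if_neg (by omega)]
    · unfold fB
      by_cases hb : b < z
      · rw [if_pos hb, cB_base, if_neg (by omega), show 0 - z = 0 from by omega,
          Nat.choose_eq_zero_of_lt (by omega : 0 < z - b), mul_zero]
      · rw [if_neg hb, cB_base]
  | succ m ih =>
    intro z b
    constructor
    · cases z with
      | zero =>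
        rw [cA_zero]
        unfold fA
        rw [if_neg (by omega)]
      | succ z' =>
        cases b with
        | zero => rw [cA_succ_zero, (ih z' 0).2, arithA2]
        | succ b' => rw [cA_succ_succ, (ih z' b').1, (ih z' (b'+1)).2, arithA1]
    · rw [cB_succ, (ih z b).1, (ih z b).2, arithB]

lemma core (m o b : ℕ) :
    ((univ : Finset (Fin (m+1) → Fin 2)).filter
        fun s => oCount s = o ∧ cycCount s = b).card * o
      = (m+1) * ((univ : Finset (Fin (m+1) → Fin 2)).filter
        fun t => t 0 = 1 ∧ oCount t = o ∧ aCount t = b).card := by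
  classical
  set S := (univ : Finset (Fin (m+1) → Fin 2)).filter
    (fun s => oCount s = o ∧ cycCount s = b) with hS
  set W := (univ : Finset (Fin (m+1) → Fin 2)).filter
    (fun t => t 0 = 1 ∧ oCount t = o ∧ aCount t = b) with hW
  have hT : (S.sigma (fun s => (univ : Finset (Fin (m+1))).filter fun k => s k = 1)).card
      = S.card * o := by
    rw [Finset.card_sigma]
    rw [Finset.sum_congr rfl (fun s hs => ?_), Finset.sum_const, smul_eq_mul]
    have := (Finset.mem_filter.mp hs).2.1
    exact this
  have hB : (S.sigma (fun s => (univ : Finset (Fin (m+1))).filter fun k => s k = 1)).card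
      = ((univ : Finset (Fin (m+1))) ×ˢ W).card := by
    refine Finset.card_bij' (fun p _ => (p.2, fun j => p.1 (p.2 + j)))
      (fun q _ => ⟨fun i => q.2 (i - q.1), q.1⟩) ?hi ?hj ?left ?right
    case hi =>
      rintro ⟨s, k⟩ hp
      dsimp only
      obtain ⟨hs, hk⟩ := Finset.mem_sigma.mp hp
      obtain ⟨-, ho, hc⟩ := Finset.mem_filter.mp hs
      have hk1 : s k = 1 := (Finset.mem_filter.mp hk).2
      refine Finset.mem_product.mpr ⟨Finset.mem_univ _, Finset.mem_filter.mpr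
        ⟨Finset.mem_univ _, ?_, ?_, ?_⟩⟩
      · show s (k + 0) = 1
        rw [add_zero]; exact hk1
      · show oCount (fun j => s (k + j)) = o
        rw [oCount_rot]; exact ho
      · show aCount (fun j => s (k + j)) = b
        rw [← cycCount_eq_aCount _ (show s (k + 0) = 1 by rw [add_zero]; exact hk1),
          cycCount_rot]
        exact hc
    case hj =>
      rintro ⟨k, t⟩ hq
      dsimp only
      obtain ⟨-, ht⟩ := Finset.mem_product.mp hq
      obtain ⟨-, h0, ho, ha⟩ := Finset.mem_filter.mp ht
      have hfun : (fun i : Fin (m+1) => t (i - k)) = fun i => t (-k + i) := by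
        funext i; rw [sub_eq_neg_add]
      refine Finset.mem_sigma.mpr ⟨Finset.mem_filter.mpr ⟨Finset.mem_univ _, ?_, ?_⟩,
        Finset.mem_filter.mpr ⟨Finset.mem_univ _, ?_⟩⟩
      · show oCount (fun i => t (i - k)) = o
        rw [hfun, oCount_rot]; exact ho
      · show cycCount (fun i => t (i - k)) = b
        rw [hfun, cycCount_rot, cycCount_eq_aCount _ h0]; exact ha
      · show t (k - k) = 1
        rw [sub_self]; exact h0
    case left =>
      rintro ⟨s, k⟩ hp
      dsimp only
      have hfun : (fun i : Fin (m+1) => s (k + (i - k))) = s := by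
        funext i; rw [add_comm, sub_add_cancel]
      show (⟨fun i => s (k + (i - k)), k⟩ : Σ _ : Fin (m+1) → Fin 2, Fin (m+1)) = ⟨s, k⟩
      rw [hfun]
    case right =>
      rintro ⟨k, t⟩ hq
      dsimp only
      have hfun : (fun j : Fin (m+1) => t (k + j - k)) = t := by
        funext j; rw [add_sub_cancel_left]
      show (k, fun j : Fin (m+1) => t (k + j - k)) = (k, t)
      rw [hfun]
  rw [← hT, hB, Finset.card_product, Finset.card_univ, Fintype.card_fin]

lemma key (m o z b : ℕ) (hoz : o + z = m + 1) :
    ((univ : Finset (Fin (m+1) → Fin 2)).filter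
        fun s => oCount s = o ∧ cycCount s = b).card * o
      = (m+1) * (cA m z b + cB m z b) := by
  rw [core]
  congr 1
  rw [split_last (Q := fun t : Fin (m+1) → Fin 2 => t 0 = 1 ∧ oCount t = o ∧ aCount t = b)]
  unfold cA cB
  congr 1 <;> apply card_filter_congr <;> intro t <;> have hzo := oCount_add_zCount t <;>
    constructor
  · rintro ⟨⟨h1, h2, h3⟩, h4⟩
    exact ⟨h1, h4, by omega, h3⟩
  · rintro ⟨h1, h4, h2, h3⟩
    exact ⟨⟨h1, by omega, h3⟩, h4⟩
  · rintro ⟨⟨h1, h2, h3⟩, h4⟩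
    exact ⟨h1, h4, by omega, h3⟩
  · rintro ⟨h1, h4, h2, h3⟩
    exact ⟨⟨h1, by omega, h3⟩, h4⟩

/-- The cyclically next position: `k + 1` taken modulo `2n`. -/
def nextPos {n : ℕ} (k : Fin (2 * n)) : Fin (2 * n) :=
  ⟨(k.val + 1) % (2 * n), Nat.mod_lt _ (Nat.lt_of_le_of_lt (Nat.zero_le _) k.isLt)⟩

/-- The number of cyclic binary sequences of length `2n` with exactly `n+1`
ones and `n-1` zeros containing exactly `b` cyclically-consecutive pairs of zeros is
`(2n/(n+1)) · C(n+1, n-b-1) · C(n-2, b)`. -/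
theorem stmt_13 (n b : ℕ) (hn : 2 ≤ n) (hb : b ≤ n - 2) :
    ((((Finset.univ : Finset (Fin (2 * n) → Fin 2))).filter
        (fun s => (Finset.univ.filter fun i => s i = 1).card = n + 1 ∧
          (Finset.univ.filter fun k => s k = 0 ∧ s (nextPos k) = 0).card = b)).card : ℚ)
      = (2 * n / ((n : ℚ) + 1)) * (Nat.choose (n + 1) (n - b - 1)) * (Nat.choose (n - 2) b) := by
  haveI : NeZero (2 * n) := ⟨by omega⟩
  have hnext : ∀ k : Fin (2 * n), nextPos k = k + 1 := by
    intro k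
    apply Fin.ext
    show (k.val + 1) % (2 * n) = _
    rw [Fin.val_add, Fin.val_one' (2 * n), Nat.mod_eq_of_lt (show 1 < 2 * n by omega)]
  have e : (((Finset.univ : Finset (Fin (2 * n) → Fin 2))).filter
        (fun s => (Finset.univ.filter fun i => s i = 1).card = n + 1 ∧
          (Finset.univ.filter fun k => s k = 0 ∧ s (nextPos k) = 0).card = b)).card
      = (((Finset.univ : Finset (Fin (2 * n) → Fin 2))).filter
        (fun s => oCount s = n + 1 ∧ cycCount s = b)).card := by
    apply card_filter_congr
    intro s
    unfold oCount cycCount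
    simp_rw [hnext]
  rw [e]
  clear e
  obtain ⟨m, hm⟩ : ∃ m, 2 * n = m + 1 := ⟨2 * n - 1, by omega⟩
  -- closed form for cA + cB
  have hfab : cA m (n-1) b + cB m (n-1) b
      = Nat.choose (n-2) b * Nat.choose (n+1) (n-b-1) := by
    rw [(count_eq m (n-1) b).1, (count_eq m (n-1) b).2]
    unfold fA fB
    rw [if_pos (show n-1 ≤ m ∧ 1 ≤ n-1 ∧ b < n-1 by omega), if_pos (show b < n-1 by omega)]
    rw [show n - 1 - 1 = n - 2 from by omega,
      show m - (n - 1) = n from by omega, show n - 1 - b = (n - 2 - b) + 1 from by omega,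
      ← Nat.left_distrib, ← Nat.choose_succ_succ]
    simp only [Nat.succ_eq_add_one]
    rw [show (n - 2 - b) + 1 = n - b - 1 from by omega,
      Nat.choose_symm (show b ≤ n - 2 from hb)]
  have general : ∀ (M : ℕ) (_ : M = m + 1) (_ : NeZero M),
      (((univ : Finset (Fin M → Fin 2)).filter
          fun s => oCount s = n + 1 ∧ cycCount s = b).card) * (n + 1)
        = M * (Nat.choose (n-2) b * Nat.choose (n+1) (n-b-1)) := by
    rintro M rfl inst
    have h := key m (n+1) (n-1) b (by omega)
    rw [hfab] at h
    exact h
  have HN := general (2 * n) hm inferInstance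
  have hQ := congrArg (fun x : ℕ => (x : ℚ)) HN
  push_cast at hQ
  have hne : (n : ℚ) + 1 ≠ 0 := by positivity
  field_simp
  linear_combination hQ
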